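/- For every two-rowed array X, every k ≥ −1 and every a ∈ ℤ≥0, f̃(X + X_k(2a)) = f̃(X) + X_k(2a), where both sides are understood to be 0 if f̃X = 0. -/

import Mathlib

/-- A two-rowed array: a pair of sequences of non-negative integers indexed by `ℤ`
(the `x`-row and the `y`-row). -/
abbrev TwoRow : Type := (ℤ → ℕ) × (ℤ → ℕ)

/-- A two-rowed array has finite support and vanishes for all `k ≤ -2`. -/
def TwoRow.Supported (X : TwoRow) : Prop :=
  (∀ k : ℤ, k ≤ -2 → X.1 k = 0 ∧ X.2 k = 0) ∧
    ∃ N : ℤ, ∀ k : ℤ, N ≤ k → X.1 k = 0 ∧ X.2 k = 0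

/-- `q(z) = ⌊z/2⌋` -/
def qH (z : ℕ) : ℕ := z / 2

/-- `r(z) = z - 2⌊z/2⌋` -/
def rH (z : ℕ) : ℕ := z % 2

/-- `z_k = min{x_k, r(y_k) + 2q(y_{k-1})}` -/
def zS (X : TwoRow) (k : ℤ) : ℕ := min (X.1 k) (rH (X.2 k) + 2 * qH (X.2 (k - 1)))

/-- `X_k = x_k - z_k + z_{k-1}` -/
def XS (X : TwoRow) (k : ℤ) : ℕ := X.1 k - zS X k + zS X (k - 1)

/-- The operation `F`, given by `X̃_k = r(X_k) + 2q(X_{k-1})` and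
`Ỹ_k = r(y_k) + 2q(y_{k-1}) - z_k + z_{k-1}`. -/
def Fop (X : TwoRow) : TwoRow :=
  (fun k => rH (XS X k) + 2 * qH (XS X (k - 1)),
   fun k => rH (X.2 k) + 2 * qH (X.2 (k - 1)) - zS X k + zS X (k - 1))

/-- `𝗫_k(a)`: the two-rowed array whose only non-zero entries are `x_{k+1} = a` and `y_k = a`. -/
def XkArr (k : ℤ) (a : ℕ) : TwoRow :=
  (fun j => if j = k + 1 then a else 0, fun j => if j = k then a else 0)

/-- `X` is reduced if `min{x_{k+1}, y_k} ≤ 1` for every `k`. -/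
def TwoRow.Reduced (X : TwoRow) : Prop := ∀ k : ℤ, min (X.1 (k + 1)) (X.2 k) ≤ 1
open scoped Classical

/-- The annotated signature of `X` read from column `N` down to column `-1`:
`true` stands for a `+` (coming from the block `+^{x_k}`) and `false` for a `−`
(coming from `−^{y_k}`); within each column the `−`'s precede the `+`'s, and
columns are listed with `k` decreasing from left to right. -/
def sigFrom (X : TwoRow) (N : ℤ) : List (Bool × ℤ) :=
  ((List.range (N + 2).toNat).map fun t =>
      List.replicate (X.2 (N - (t : ℤ))) ((false, N - (t : ℤ)) : Bool × ℤ) ++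
        List.replicate (X.1 (N - (t : ℤ))) ((true, N - (t : ℤ)) : Bool × ℤ)).flatten

/-- The signature of a (finitely supported) two-rowed array. -/
noncomputable def sigOf (X : TwoRow) : List (Bool × ℤ) :=
  sigFrom X (if h : ∃ N : ℤ, ∀ k : ℤ, N ≤ k → X.1 k = 0 ∧ X.2 k = 0 then h.choose else 0)

/-- One step of the cancellation of pairs `(+,−)` (a `+` standing to the left of a `−`,
with everything in between already removed), implemented with a stack. -/
def redStep {α : Type} (st : List (Bool × α)) (c : Bool × α) : List (Bool × α) :=
  match c.1, st with
  | false, (true, _) :: st' => st'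
  | _, _ => c :: st

/-- The reduced form of a signature. -/
def reduceSig {α : Type} (l : List (Bool × α)) : List (Bool × α) := (l.foldl redStep []).reverse

/-- The reduced signature `σ̄(X)` (annotated by the column index each symbol comes from). -/
noncomputable def redSig (X : TwoRow) : List (Bool × ℤ) := reduceSig (sigOf X)

/-- The operator `f̃`: if the reduced signature contains no `+`, the result is `0` (`none`);
otherwise, if the leftmost remaining `+` comes from the block `+^{x_k}`, the result is
`X - x_k(1) + y_k(1)`. -/
noncomputable def ftilde (X : TwoRow) : Option TwoRow :=
  match (redSig X).find? (fun c => c.1) with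
  | none => none
  | some c =>
      some (fun j => if j = c.2 then X.1 j - 1 else X.1 j,
            fun j => if j = c.2 then X.2 j + 1 else X.2 j)



lemma sigFrom_def (X : TwoRow) (N : ℤ) :
    sigFrom X N = ((List.range (N + 2).toNat).map fun (t : ℕ) =>
      List.replicate (X.2 (N - (t : ℤ))) ((false, N - (t : ℤ)) : Bool × ℤ) ++
        List.replicate (X.1 (N - (t : ℤ))) ((true, N - (t : ℤ)) : Bool × ℤ)).flatten := by
  unfold sigFrom
  simp only [bind_pure_comp, List.map_eq_map, List.map_map]
  rfl

lemma sigFrom_succ (X : TwoRow) (N : ℤ) (hN : -2 ≤ N) :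
    sigFrom X (N + 1) =
      (List.replicate (X.2 (N + 1)) ((false, N + 1) : Bool × ℤ) ++
        List.replicate (X.1 (N + 1)) ((true, N + 1) : Bool × ℤ)) ++ sigFrom X N := by
  rw [sigFrom_def, sigFrom_def]
  have h1 : (N + 1 + 2).toNat = (N + 2).toNat + 1 := by omega
  rw [h1, List.range_succ_eq_map]
  rw [List.map_cons, List.map_map]
  have hjc : ∀ (x : List (Bool × ℤ)) (l : List (List (Bool × ℤ))),
      (x :: l).flatten = x ++ l.flatten := fun _ _ => rfl
  rw [hjc]
  have h0 : N + 1 - ((0 : ℕ) : ℤ) = N + 1 := by norm_num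
  rw [h0]
  congr 2
  · apply List.map_congr_left
    intro t _
    have h2 : N + 1 - ((Nat.succ t : ℕ) : ℤ) = N - (t : ℤ) := by push_cast; ring
    simp only [Function.comp_apply, h2]

lemma sigFrom_nil (X : TwoRow) (N : ℤ) (h : ∀ j : ℤ, -1 ≤ j → X.1 j = 0 ∧ X.2 j = 0) :
    sigFrom X N = [] := by
  rw [sigFrom_def]
  rw [List.flatten_eq_nil_iff]
  intro l hl
  simp only [List.mem_map, List.mem_range] at hl
  obtain ⟨t, ht, rfl⟩ := hl
  have hj : -1 ≤ N - (t : ℤ) := by omega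
  rw [(h _ hj).1, (h _ hj).2]
  simp

lemma sigFrom_stable (X : TwoRow) (N M : ℤ) (hNM : N ≤ M)
    (h : ∀ j : ℤ, N < j → X.1 j = 0 ∧ X.2 j = 0) :
    sigFrom X M = sigFrom X N := by
  rcases le_or_gt (-2) N with hN | hN
  · obtain ⟨d, hd⟩ : ∃ d : ℕ, M = N + d := ⟨(M - N).toNat, by omega⟩
    subst hd
    clear hNM
    induction d with
    | zero => simp
    | succ n ih =>
      have he : N + ((n + 1 : ℕ) : ℤ) = (N + (n : ℤ)) + 1 := by push_cast; ring
      rw [he, sigFrom_succ X (N + (n : ℤ)) (by omega)]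
      rw [(h _ (by omega)).1, (h _ (by omega)).2]
      simpa using ih
  · have hz : ∀ j : ℤ, -1 ≤ j → X.1 j = 0 ∧ X.2 j = 0 := fun j hj => h j (by omega)
    rw [sigFrom_nil X M hz, sigFrom_nil X N hz]

lemma sigFrom_congr (X Y : TwoRow) (N : ℤ)
    (h : ∀ j : ℤ, j ≤ N → X.1 j = Y.1 j ∧ X.2 j = Y.2 j) :
    sigFrom X N = sigFrom Y N := by
  rw [sigFrom_def, sigFrom_def]
  congr 1
  apply List.map_congr_left
  intro t ht
  rw [List.mem_range] at ht
  have hj : N - (t : ℤ) ≤ N := by omega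
  rw [(h _ hj).1, (h _ hj).2]

lemma foldl_push {α : Type} (n : ℕ) (c : α) (st : List (Bool × α)) :
    List.foldl redStep st (List.replicate n ((true, c) : Bool × α)) =
      List.replicate n ((true, c) : Bool × α) ++ st := by
  induction n generalizing st with
  | zero => simp
  | succ m ih =>
    rw [List.replicate_succ, List.foldl_cons, ih]
    have h1 : redStep st ((true, c) : Bool × α) = (true, c) :: st := rfl
    rw [h1]
    have h2 : List.replicate m ((true, c) : Bool × α) ++ (true, c) :: st
        = (List.replicate m ((true, c) : Bool × α) ++ [(true, c)]) ++ st := by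
      rw [List.append_assoc]; rfl
    rw [h2, ← List.replicate_succ', List.replicate_succ, List.cons_append]

lemma foldl_pop {α : Type} (n : ℕ) (c c' : α) (st : List (Bool × α)) :
    List.foldl redStep (List.replicate n ((true, c) : Bool × α) ++ st)
      (List.replicate n ((false, c') : Bool × α)) = st := by
  induction n generalizing st with
  | zero => simp
  | succ m ih =>
    rw [List.replicate_succ, List.replicate_succ, List.cons_append, List.foldl_cons]
    have h1 : redStep ((true, c) :: (List.replicate m ((true, c) : Bool × α) ++ st)) (false, c')
        = List.replicate m ((true, c) : Bool × α) ++ st := rfl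
    rw [h1, ih]

lemma foldl_cancel {α : Type} (n : ℕ) (c c' : α) (st : List (Bool × α)) :
    List.foldl redStep (List.foldl redStep st (List.replicate n ((true, c) : Bool × α)))
      (List.replicate n ((false, c') : Bool × α)) = st := by
  rw [foldl_push, foldl_pop]

lemma mem_redStep {α : Type} (st : List (Bool × α)) (c0 c : Bool × α)
    (h : c ∈ redStep st c0) : c = c0 ∨ c ∈ st := by
  rcases c0 with ⟨b, x⟩
  cases b
  · rcases st with _ | ⟨⟨b', y⟩, st'⟩
    · simp [redStep] at h; exact Or.inl h
    · cases b'
      · simp [redStep] at h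
        rcases h with h | h
        · exact Or.inl (by simp [h])
        · exact Or.inr (by simp [h])
      · simp [redStep] at h
        exact Or.inr (by simp [h])
  · simp [redStep] at h
    rcases h with h | h
    · exact Or.inl (by simp [h])
    · exact Or.inr h

lemma mem_foldl_redStep {α : Type} : ∀ (l : List (Bool × α)) (st : List (Bool × α))
    (c : Bool × α), c ∈ List.foldl redStep st l → c ∈ st ∨ c ∈ l := by
  intro l
  induction l with
  | nil => intro st c h; exact Or.inl h
  | cons d l ih =>
    intro st c h
    rw [List.foldl_cons] at h
    rcases ih _ c h with h' | h'
    · rcases mem_redStep _ _ _ h' with h'' | h''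
      · exact Or.inr (by simp [h''])
      · exact Or.inl h''
    · exact Or.inr (List.mem_cons_of_mem _ h')

lemma pos_of_mem_sigFrom (X : TwoRow) (N : ℤ) (j : ℤ)
    (h : ((true, j) : Bool × ℤ) ∈ sigFrom X N) : X.1 j ≠ 0 := by
  rw [sigFrom_def] at h
  rw [List.mem_flatten] at h
  obtain ⟨l, hl, hc⟩ := h
  simp only [List.mem_map, List.mem_range] at hl
  obtain ⟨t, -, rfl⟩ := hl
  rw [List.mem_append] at hc
  rcases hc with hc | hc
  · have := List.eq_of_mem_replicate hc; simp at this
  · obtain ⟨hn, he⟩ := List.mem_replicate.mp hc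
    have hje : j = N - (t : ℤ) := by simpa using he
    rw [hje]; exact hn

lemma addXk_fst (X : TwoRow) (k : ℤ) (m : ℕ) (j : ℤ) :
    (X + XkArr k m).1 j = X.1 j + if j = k + 1 then m else 0 := rfl

lemma addXk_snd (X : TwoRow) (k : ℤ) (m : ℕ) (j : ℤ) :
    (X + XkArr k m).2 j = X.2 j + if j = k then m else 0 := rfl

lemma foldl_sig (X : TwoRow) (k : ℤ) (hk : -1 ≤ k) (a : ℕ) (N : ℤ) (hN : k + 1 ≤ N)
    (st : List (Bool × ℤ)) :
    List.foldl redStep st (sigFrom (X + XkArr k (2 * a)) N) =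
      List.foldl redStep st (sigFrom X N) := by
  obtain ⟨d, hd⟩ : ∃ d : ℕ, N = (k + 1) + d := ⟨(N - (k + 1)).toNat, by omega⟩
  subst hd
  clear hN
  induction d generalizing st with
  | zero =>
    simp only [Nat.cast_zero, add_zero]
    have hS : sigFrom (X + XkArr k (2 * a)) (k - 1) = sigFrom X (k - 1) := by
      apply sigFrom_congr
      intro j hj
      rw [addXk_fst, addXk_snd, if_neg (by omega), if_neg (by omega)]
      simp
    have e1 : (X + XkArr k (2 * a)).1 (k + 1) = X.1 (k + 1) + 2 * a := by
      rw [addXk_fst, if_pos rfl]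
    have e2 : (X + XkArr k (2 * a)).2 (k + 1) = X.2 (k + 1) := by
      rw [addXk_snd, if_neg (by omega), add_zero]
    have e3 : (X + XkArr k (2 * a)).1 k = X.1 k := by
      rw [addXk_fst, if_neg (by omega), add_zero]
    have e4 : (X + XkArr k (2 * a)).2 k = X.2 k + 2 * a := by
      rw [addXk_snd, if_pos rfl]
    have h2 : sigFrom (X + XkArr k (2 * a)) ((k - 1) + 1) =
        (List.replicate ((X + XkArr k (2 * a)).2 ((k - 1) + 1)) ((false, (k - 1) + 1) : Bool × ℤ) ++
          List.replicate ((X + XkArr k (2 * a)).1 ((k - 1) + 1)) ((true, (k - 1) + 1) : Bool × ℤ)) ++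
          sigFrom (X + XkArr k (2 * a)) (k - 1) := sigFrom_succ _ _ (by omega)
    have h2' : sigFrom X ((k - 1) + 1) =
        (List.replicate (X.2 ((k - 1) + 1)) ((false, (k - 1) + 1) : Bool × ℤ) ++
          List.replicate (X.1 ((k - 1) + 1)) ((true, (k - 1) + 1) : Bool × ℤ)) ++
          sigFrom X (k - 1) := sigFrom_succ _ _ (by omega)
    have hkk : k - 1 + 1 = k := by ring
    rw [hkk] at h2 h2'
    rw [sigFrom_succ _ k (by omega), sigFrom_succ X k (by omega), h2, h2', hS]
    rw [e1, e2, e3, e4]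
    rw [List.replicate_add (X.1 (k + 1)) (2 * a), add_comm (X.2 k) (2 * a),
      List.replicate_add (2 * a) (X.2 k)]
    simp only [List.append_assoc, List.foldl_append]
    rw [foldl_cancel]
  | succ n ih =>
    have he : (k + 1) + ((n + 1 : ℕ) : ℤ) = ((k + 1) + (n : ℤ)) + 1 := by push_cast; ring
    have e1 : (X + XkArr k (2 * a)).1 ((k + 1) + (n : ℤ) + 1) = X.1 ((k + 1) + (n : ℤ) + 1) := by
      rw [addXk_fst, if_neg (by omega), add_zero]
    have e2 : (X + XkArr k (2 * a)).2 ((k + 1) + (n : ℤ) + 1) = X.2 ((k + 1) + (n : ℤ) + 1) := by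
      rw [addXk_snd, if_neg (by omega), add_zero]
    rw [he, sigFrom_succ _ _ (by omega), sigFrom_succ X _ (by omega)]
    rw [e1, e2]
    simp only [List.foldl_append]
    rw [ih]

/-- For every two-rowed array `X`, every `k ≥ −1` and every `a ∈ ℤ≥0`,
`f̃(X + X_k(2a)) = f̃(X) + X_k(2a)`, both sides being `0` if `f̃X = 0`. -/
theorem statement11 (X : TwoRow) (hX : X.Supported) (k : ℤ) (hk : -1 ≤ k) (a : ℕ) :
    ftilde (X + XkArr k (2 * a)) = (ftilde X).map (· + XkArr k (2 * a)) := by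
  obtain ⟨-, N0, hN0⟩ := hX
  have hXex : ∃ N : ℤ, ∀ j : ℤ, N ≤ j → X.1 j = 0 ∧ X.2 j = 0 := ⟨N0, hN0⟩
  have hX'ex : ∃ N : ℤ, ∀ j : ℤ, N ≤ j →
      (X + XkArr k (2 * a)).1 j = 0 ∧ (X + XkArr k (2 * a)).2 j = 0 := by
    refine ⟨max N0 (k + 2), fun j hj => ?_⟩
    have h1 := hN0 j (le_trans (le_max_left _ _) hj)
    have h2 : j ≠ k + 1 := by omega
    have h3 : j ≠ k := by omega
    constructor
    · rw [addXk_fst, if_neg h2, add_zero]; exact h1.1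
    · rw [addXk_snd, if_neg h3, add_zero]; exact h1.2
  have hsig : sigOf X = sigFrom X hXex.choose := by
    unfold sigOf; rw [dif_pos hXex]
  have hsig' : sigOf (X + XkArr k (2 * a)) = sigFrom (X + XkArr k (2 * a)) hX'ex.choose := by
    unfold sigOf; rw [dif_pos hX'ex]
  set N1 := hX'ex.choose with hN1def
  set N2 := hXex.choose with hN2def
  have hs1 := hX'ex.choose_spec
  have hs2 := hXex.choose_spec
  set Nt : ℤ := max (max N1 N2) (max (k + 2) 0) with hNtdef
  have hst1 : sigFrom (X + XkArr k (2 * a)) Nt = sigFrom (X + XkArr k (2 * a)) N1 :=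
    sigFrom_stable _ N1 Nt (by omega) (fun j hj => hs1 j (le_of_lt hj))
  have hst2 : sigFrom X Nt = sigFrom X N2 :=
    sigFrom_stable _ N2 Nt (by omega) (fun j hj => hs2 j (le_of_lt hj))
  have hred : redSig (X + XkArr k (2 * a)) = redSig X := by
    unfold redSig reduceSig
    rw [hsig, hsig', ← hst1, ← hst2]
    rw [foldl_sig X k hk a Nt (by omega)]
  unfold ftilde
  rw [hred]
  rcases hfind : (redSig X).find? (fun c => c.1) with _ | c
  · simp only [hfind, Option.map_none]
  · simp only [hfind, Option.map_some]
    have hctrue : c.1 = true := by simpa using List.find?_some hfind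
    have hcmem : c ∈ redSig X := List.mem_of_find?_eq_some hfind
    have hmem2 : c ∈ sigOf X := by
      unfold redSig reduceSig at hcmem
      rw [List.mem_reverse] at hcmem
      rcases mem_foldl_redStep _ _ _ hcmem with h | h
      · simp at h
      · exact h
    have hceq : c = ((true, c.2) : Bool × ℤ) := by
      rcases c with ⟨b, j⟩; simp at hctrue; simp [hctrue]
    have hpos : X.1 c.2 ≠ 0 := by
      apply pos_of_mem_sigFrom X N2 c.2
      rw [← hsig, ← hceq]
      exact hmem2
    have hpos' : 1 ≤ X.1 c.2 := Nat.one_le_iff_ne_zero.mpr hpos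
    congr 1
    refine Prod.ext ?_ ?_
    · funext j
      show (if j = c.2 then (X + XkArr k (2 * a)).1 j - 1 else (X + XkArr k (2 * a)).1 j)
          = (if j = c.2 then X.1 j - 1 else X.1 j) + (if j = k + 1 then (2 * a : ℕ) else 0)
      by_cases hj : j = c.2
      · subst hj
        rw [if_pos rfl, if_pos rfl, addXk_fst]
        split_ifs <;> omega
      · rw [if_neg hj, if_neg hj, addXk_fst]
    · funext j
      show (if j = c.2 then (X + XkArr k (2 * a)).2 j + 1 else (X + XkArr k (2 * a)).2 j)
          = (if j = c.2 then X.2 j + 1 else X.2 j) + (if j = k then (2 * a : ℕ) else 0)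
      by_cases hj : j = c.2
      · subst hj
        rw [if_pos rfl, if_pos rfl, addXk_snd]
        split_ifs <;> omega
      · rw [if_neg hj, if_neg hj, addXk_snd]
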